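/- Let R = [[R_S, 0],[0, R_R]] be the upper triangular factor of a canonical QR decomposition, block-partitioned according to H = H_S ⊕ H_R, with vanishing upper-right block R_P = 0. Let V = [[V_S, V_P],[V_Q, V_R]] be unitary and set N = VR with blocks N_S, N_P, N_Q, N_R. If N_Q = 0 then N_P = 0. -/

import Mathlib

open Matrix

/-- The rank of the matrix formed by the first `j` columns of `A`. -/
noncomputable def colRank (n : ℕ) (A : Matrix (Fin n) (Fin n) ℂ) (j : ℕ) : ℕ :=
  Module.finrank ℂ (Submodule.span ℂ ((fun l => Aᵀ l) '' {l : Fin n | (l : ℕ) < j}))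

/-- `R` satisfies the conditions of a canonical upper-triangular QR factor:
entries below row `ρ_j` (rank of the first `j` columns) in column `j` vanish,
and the first nonzero entry of each row is real and positive. -/
def IsCanonicalTriangular (n : ℕ) (R : Matrix (Fin n) (Fin n) ℂ) : Prop :=
  (∀ i j : Fin n, colRank n R ((j : ℕ) + 1) ≤ (i : ℕ) → R i j = 0) ∧
  (∀ i j : Fin n, (∀ j' : Fin n, j' < j → R i j' = 0) → R i j ≠ 0 →
    (R i j).im = 0 ∧ 0 < (R i j).re)

lemma colRank_le (n : ℕ) (A : Matrix (Fin n) (Fin n) ℂ) (j : ℕ) : colRank n A j ≤ j := by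
  classical
  have h1 : ((fun l => Aᵀ l) '' {l : Fin n | (l : ℕ) < j}) =
      ↑((Finset.univ.filter (fun l : Fin n => (l : ℕ) < j)).image (fun l => Aᵀ l)) := by
    ext x; simp
  rw [colRank, h1]
  refine (finrank_span_finset_le_card _).trans ?_
  refine (Finset.card_image_le).trans ?_
  have : (Finset.univ.filter (fun l : Fin n => (l : ℕ) < j)).card ≤ (Finset.range j).card :=
    Finset.card_le_card_of_injOn (fun l => (l : ℕ))
      (fun l hl => by simp at hl ⊢; exact hl)
      (fun a _ b _ hab => Fin.ext hab)
  simpa using this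

lemma colRank_succ_le (n : ℕ) (A : Matrix (Fin n) (Fin n) ℂ) (j : ℕ) :
    colRank n A (j + 1) ≤ colRank n A j + 1 := by
  classical
  by_cases hj : j < n
  · have hset : {l : Fin n | (l : ℕ) < j + 1} = insert ⟨j, hj⟩ {l : Fin n | (l : ℕ) < j} := by
      ext l; simp [Fin.ext_iff]; omega
    rw [colRank, hset, Set.image_insert_eq]
    rw [Submodule.span_insert]
    refine (Submodule.finrank_add_le_finrank_add_finrank _ _).trans ?_
    rw [add_comm]
    have h2 : Module.finrank ℂ (Submodule.span ℂ ({Aᵀ ⟨j, hj⟩} : Set (Fin n → ℂ))) ≤ 1 := by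
      refine (finrank_span_le_card _).trans ?_
      simp
    have h3 : colRank n A j = Module.finrank ℂ
        (Submodule.span ℂ ((fun l => Aᵀ l) '' {l : Fin n | (l : ℕ) < j})) := rfl
    omega
  · have hset : {l : Fin n | (l : ℕ) < j + 1} = {l : Fin n | (l : ℕ) < j} := by
      ext l; have := l.isLt; simp; omega
    rw [colRank, hset]; exact Nat.le_succ _

lemma colRank_succ_eq (n : ℕ) (A : Matrix (Fin n) (Fin n) ℂ) (j : ℕ)
    (h : ∀ l : Fin n, (l : ℕ) = j → Aᵀ l = 0) :
    colRank n A (j + 1) = colRank n A j := by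
  classical
  by_cases hj : j < n
  · have hset : {l : Fin n | (l : ℕ) < j + 1} = insert ⟨j, hj⟩ {l : Fin n | (l : ℕ) < j} := by
      ext l; simp [Fin.ext_iff]; omega
    rw [colRank, hset, Set.image_insert_eq, h ⟨j, hj⟩ rfl, Submodule.span_insert_zero]
    rfl
  · have hset : {l : Fin n | (l : ℕ) < j + 1} = {l : Fin n | (l : ℕ) < j} := by
      ext l; have := l.isLt; simp; omega
    rw [colRank, hset]; rfl

/-- In the singular case, all columns past `m` vanish entirely. -/
lemma RR_eq_zero (m r : ℕ) (R : Matrix (Fin (m + r)) (Fin (m + r)) ℂ)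
    (hR : IsCanonicalTriangular (m + r) R)
    (hRP : ∀ (i : Fin m) (j : Fin r), R (Fin.castAdd r i) (Fin.natAdd m j) = 0)
    (hlt : colRank (m + r) R m < m) :
    ∀ j : Fin (m + r), m ≤ (j : ℕ) → ∀ i, R i j = 0 := by
  have key : ∀ k : ℕ, colRank (m + r) R (m + k) < m ∧
      (∀ j : Fin (m + r), m ≤ (j : ℕ) → (j : ℕ) < m + k → ∀ i, R i j = 0) := by
    intro k
    induction k with
    | zero => exact ⟨hlt, fun j hj hj' i => absurd hj' (by omega)⟩
    | succ k ih =>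
      obtain ⟨hrk, hcols⟩ := ih
      have hle : colRank (m + r) R (m + k + 1) ≤ m :=
        (colRank_succ_le _ _ _).trans (by omega)
      have hcolzero : ∀ l : Fin (m + r), (l : ℕ) = m + k → ∀ i, R i l = 0 := by
        intro l hl i
        by_cases him : (i : ℕ) < m
        · have hml : m ≤ (l : ℕ) := by omega
          have h1 : i = Fin.castAdd r ⟨(i : ℕ), him⟩ := by
            apply Fin.ext; simp
          have h2 : l = Fin.natAdd m ⟨(l : ℕ) - m, by omega⟩ := by
            apply Fin.ext; simp; omega
          rw [h1, h2]; exact hRP _ _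
        · apply hR.1 i l
          have : colRank (m + r) R ((l : ℕ) + 1) ≤ m := by rw [hl]; exact hle
          omega
      have heq : colRank (m + r) R (m + (k + 1)) = colRank (m + r) R (m + k) := by
        have := colRank_succ_eq (m + r) R (m + k)
          (fun l hl => funext fun i => hcolzero l hl i)
        rw [← this]; ring_nf
      refine ⟨by rw [heq]; exact hrk, ?_⟩
      intro j hj hj' i
      by_cases hjk : (j : ℕ) < m + k
      · exact hcols j hj hjk i
      · exact hcolzero j (by omega) i
  intro j hj i
  exact (key ((j : ℕ) - m + 1)).2 j hj (by omega) i

/-- if `R` is a canonical triangular factor with `R_P = 0` and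
`N = VR` with `V` unitary has vanishing lower-left block, then `N` also has
vanishing upper-right block. -/
theorem NQ_zero_implies_NP_zero
    (m r : ℕ) (R V : Matrix (Fin (m + r)) (Fin (m + r)) ℂ)
    (hR : IsCanonicalTriangular (m + r) R)
    (hRP : ∀ (i : Fin m) (j : Fin r), R (Fin.castAdd r i) (Fin.natAdd m j) = 0)
    (hRQ : ∀ (i : Fin r) (j : Fin m), R (Fin.natAdd m i) (Fin.castAdd r j) = 0)
    (hV : Vᴴ * V = 1)
    (hNQ : ∀ (i : Fin r) (j : Fin m), (V * R) (Fin.natAdd m i) (Fin.castAdd r j) = 0) :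
    ∀ (i : Fin m) (j : Fin r), (V * R) (Fin.castAdd r i) (Fin.natAdd m j) = 0 := by
  intro i j
  by_cases hlt : colRank (m + r) R m < m
  · -- singular case: the whole column `natAdd m j` of `R` vanishes
    have hcol := RR_eq_zero m r R hR hRP hlt (Fin.natAdd m j) (by simp)
    rw [Matrix.mul_apply]
    exact Finset.sum_eq_zero fun k _ => by rw [hcol k, mul_zero]
  · -- full rank case
    have hrank : colRank (m + r) R m = m := le_antisymm (colRank_le _ _ _) (not_lt.1 hlt)
    -- the top-left block of R
    set S : Matrix (Fin m) (Fin m) ℂ :=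
      Matrix.of (fun a b => R (Fin.castAdd r a) (Fin.castAdd r b)) with hSdef
    -- columns of R among the first m are linearly independent
    have hrange : Set.range (fun l : Fin m => Rᵀ (Fin.castAdd r l)) =
        (fun l => Rᵀ l) '' {l : Fin (m + r) | (l : ℕ) < m} := by
      ext x
      constructor
      · rintro ⟨l, rfl⟩
        exact ⟨Fin.castAdd r l, by simp [l.isLt], rfl⟩
      · rintro ⟨l, hl, rfl⟩
        refine ⟨⟨(l : ℕ), hl⟩, ?_⟩
        have : Fin.castAdd r ⟨(l : ℕ), hl⟩ = l := Fin.ext (by simp)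
        simp only [this]
    have hindep : LinearIndependent ℂ (fun l : Fin m => Rᵀ (Fin.castAdd r l)) := by
      rw [linearIndependent_iff_card_eq_finrank_span]
      rw [Set.finrank, hrange]
      simpa [colRank] using hrank.symm
    -- lift to linear independence of columns of S
    have hcomp : (Function.ExtendByZero.linearMap ℂ (Fin.castAdd r : Fin m → Fin (m + r))) ∘
        (fun l : Fin m => Sᵀ l) = fun l : Fin m => Rᵀ (Fin.castAdd r l) := by
      funext l
      funext x
      simp only [Function.comp_apply, Function.ExtendByZero.linearMap_apply]
      refine Fin.addCases (fun a => ?_) (fun a => ?_) x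
      · rw [(Fin.castAdd_injective m r).extend_apply]
        rfl
      · rw [Function.extend_apply']
        · exact (hRQ a l).symm
        · rintro ⟨a', ha'⟩
          have := congrArg (fun z : Fin (m + r) => (z : ℕ)) ha'
          simp at this
          omega
    have hindepS : LinearIndependent ℂ (fun l : Fin m => Sᵀ l) := by
      apply LinearIndependent.of_comp
        (Function.ExtendByZero.linearMap ℂ (Fin.castAdd r : Fin m → Fin (m + r)))
      rw [hcomp]; exact hindep
    have hSunit : IsUnit S := Matrix.linearIndependent_cols_iff_isUnit.1 hindepS
    -- V_Q = 0
    have hVQ : ∀ (a : Fin r) (k : Fin m), V (Fin.natAdd m a) (Fin.castAdd r k) = 0 := by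
      intro a
      have hinj : Function.Injective S.vecMul := Matrix.vecMul_injective_iff_isUnit.2 hSunit
      have hw : (fun k => V (Fin.natAdd m a) (Fin.castAdd r k)) ᵥ* S = 0 := by
        funext b
        have h0 := hNQ a b
        rw [Matrix.mul_apply, Fin.sum_univ_add] at h0
        have h2 : ∀ k : Fin r, V (Fin.natAdd m a) (Fin.natAdd m k) *
            R (Fin.natAdd m k) (Fin.castAdd r b) = 0 := fun k => by rw [hRQ, mul_zero]
        rw [Finset.sum_congr rfl (fun k _ => h2 k), Finset.sum_const_zero, add_zero] at h0
        simpa [Matrix.vecMul, dotProduct, hSdef] using h0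
      have := hinj (hw.trans (Matrix.zero_vecMul S).symm)
      intro k
      exact congrFun this k
    -- blocks of V
    set W : Matrix (Fin m) (Fin m) ℂ :=
      Matrix.of (fun a b => V (Fin.castAdd r a) (Fin.castAdd r b)) with hWdef
    set P : Matrix (Fin m) (Fin r) ℂ :=
      Matrix.of (fun a b => V (Fin.castAdd r a) (Fin.natAdd m b)) with hPdef
    have hWW : Wᴴ * W = 1 := by
      ext a b
      have h1 := congrFun (congrFun hV (Fin.castAdd r a)) (Fin.castAdd r b)
      rw [Matrix.mul_apply, Fin.sum_univ_add] at h1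
      have h2 : ∀ k : Fin r, Vᴴ (Fin.castAdd r a) (Fin.natAdd m k) *
          V (Fin.natAdd m k) (Fin.castAdd r b) = 0 := fun k => by
        rw [hVQ k b, mul_zero]
      rw [Finset.sum_congr rfl (fun k _ => h2 k), Finset.sum_const_zero, add_zero] at h1
      rw [Matrix.mul_apply]
      have hone : (1 : Matrix (Fin (m + r)) (Fin (m + r)) ℂ) (Fin.castAdd r a) (Fin.castAdd r b)
          = (1 : Matrix (Fin m) (Fin m) ℂ) a b := by
        by_cases hab : a = b
        · subst hab; simp
        · rw [Matrix.one_apply_ne, Matrix.one_apply_ne hab]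
          intro h; exact hab (Fin.castAdd_injective m r h)
      rw [← hone, ← h1]
      apply Finset.sum_congr rfl
      intro k _
      simp [Matrix.conjTranspose_apply, hWdef]
    have hWP : Wᴴ * P = 0 := by
      ext a b
      have h1 := congrFun (congrFun hV (Fin.castAdd r a)) (Fin.natAdd m b)
      rw [Matrix.mul_apply, Fin.sum_univ_add] at h1
      have h2 : ∀ k : Fin r, Vᴴ (Fin.castAdd r a) (Fin.natAdd m k) *
          V (Fin.natAdd m k) (Fin.natAdd m b) = 0 := fun k => by
        rw [Matrix.conjTranspose_apply, hVQ k a, star_zero, zero_mul]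
      rw [Finset.sum_congr rfl (fun k _ => h2 k), Finset.sum_const_zero, add_zero] at h1
      have hne : (Fin.castAdd r a : Fin (m + r)) ≠ Fin.natAdd m b := by
        intro h
        have := congrArg (fun z : Fin (m + r) => (z : ℕ)) h
        simp at this
        omega
      rw [Matrix.one_apply_ne hne] at h1
      rw [Matrix.mul_apply, Matrix.zero_apply, ← h1]
      apply Finset.sum_congr rfl
      intro k _
      simp [Matrix.conjTranspose_apply, hWdef, hPdef]
    -- hence P = 0
    have hWunit : IsUnit (Wᴴ) := (Matrix.isUnit_iff_isUnit_det _).2 (Matrix.isUnit_det_of_right_inverse hWW)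
    have hP : P = 0 := by
      obtain ⟨Winv⟩ := hWunit.nonempty_invertible
      calc P = ⅟(Wᴴ) * (Wᴴ * P) := by
                rw [← Matrix.mul_assoc, invOf_mul_self, Matrix.one_mul]
        _ = ⅟(Wᴴ) * (0 : Matrix (Fin m) (Fin r) ℂ) := by rw [hWP]
        _ = 0 := by rw [Matrix.mul_zero]
    -- conclude
    rw [Matrix.mul_apply, Fin.sum_univ_add]
    have hA : ∀ k : Fin m, V (Fin.castAdd r i) (Fin.castAdd r k) *
        R (Fin.castAdd r k) (Fin.natAdd m j) = 0 := fun k => by rw [hRP, mul_zero]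
    have hB : ∀ k : Fin r, V (Fin.castAdd r i) (Fin.natAdd m k) *
        R (Fin.natAdd m k) (Fin.natAdd m j) = 0 := fun k => by
      have : V (Fin.castAdd r i) (Fin.natAdd m k) = 0 := by
        have := congrFun (congrFun hP i) k
        simpa [hPdef] using this
      rw [this, zero_mul]
    rw [Finset.sum_congr rfl (fun k _ => hA k), Finset.sum_congr rfl (fun k _ => hB k)]
    simp
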